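/- The function r ↦ m(r) / (4 E'(r) K(r) − π) is strictly decreasing on (0,1), and it maps (0,1) onto (0, ∞). -/

import Mathlib

open Real Set Filter

/-- Complete elliptic integral of the first kind. -/
noncomputable def K (r : ℝ) : ℝ :=
  ∫ θ in (0:ℝ)..(π/2), 1 / Real.sqrt (1 - r^2 * Real.sin θ ^ 2)

/-- Complete elliptic integral of the second kind. -/
noncomputable def E (r : ℝ) : ℝ :=
  ∫ θ in (0:ℝ)..(π/2), Real.sqrt (1 - r^2 * Real.sin θ ^ 2)

/-- Complementary complete elliptic integral of the first kind: `K'(r) = K(√(1-r²))`. -/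
noncomputable def K' (r : ℝ) : ℝ := K (Real.sqrt (1 - r^2))

/-- Complementary complete elliptic integral of the second kind: `E'(r) = E(√(1-r²))`. -/
noncomputable def E' (r : ℝ) : ℝ := E (Real.sqrt (1 - r^2))

/-- The special function `m(r) = (2/π) r'² K(r) K'(r)` (here `r'² = 1 - r²`). -/
noncomputable def m (r : ℝ) : ℝ := (2/π) * (1 - r^2) * K r * K' r


open MeasureTheory intervalIntegral Metric Topology




-- basic positivity of the radicand
lemma radicand_pos {r : ℝ} (hr : r^2 < 1) (θ : ℝ) : 0 < 1 - r^2 * Real.sin θ ^ 2 := by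
  have h1 : Real.sin θ ^ 2 ≤ 1 := Real.sin_sq_le_one θ
  nlinarith [sq_nonneg r, sq_nonneg (Real.sin θ)]

lemma radicand_le_one {r : ℝ} (θ : ℝ) : 1 - r^2 * Real.sin θ ^ 2 ≤ 1 := by
  nlinarith [sq_nonneg r, sq_nonneg (Real.sin θ)]

lemma contK {r : ℝ} (hr : r^2 < 1) :
    Continuous (fun θ : ℝ => 1 / Real.sqrt (1 - r^2 * Real.sin θ ^ 2)) := by
  apply Continuous.div continuous_const
  · exact Real.continuous_sqrt.comp (by continuity)
  · intro θ
    exact (Real.sqrt_pos.mpr (radicand_pos hr θ)).ne'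

lemma contE (r : ℝ) :
    Continuous (fun θ : ℝ => Real.sqrt (1 - r^2 * Real.sin θ ^ 2)) :=
  Real.continuous_sqrt.comp (by continuity)

lemma intbleK {r : ℝ} (hr : r^2 < 1) :
    IntervalIntegrable (fun θ : ℝ => 1 / Real.sqrt (1 - r^2 * Real.sin θ ^ 2))
      volume 0 (π/2) := (contK hr).intervalIntegrable _ _

lemma intbleE (r : ℝ) :
    IntervalIntegrable (fun θ : ℝ => Real.sqrt (1 - r^2 * Real.sin θ ^ 2))
      volume 0 (π/2) := (contE r).intervalIntegrable _ _

lemma K_ge {r : ℝ} (hr : r^2 < 1) : π/2 ≤ K r := by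
  have : π/2 = ∫ _ in (0:ℝ)..(π/2), (1:ℝ) := by simp
  rw [this, K]
  apply intervalIntegral.integral_mono_on (by positivity) (by simp [_root_.intervalIntegrable_const])
    (intbleK hr)
  intro θ _
  rw [le_div_iff₀ (Real.sqrt_pos.mpr (radicand_pos hr θ)), one_mul]
  exact Real.sqrt_le_one.mpr (by nlinarith [sq_nonneg r, sq_nonneg (Real.sin θ)])

lemma K_pos {r : ℝ} (hr : r^2 < 1) : 0 < K r := lt_of_lt_of_le (by positivity) (K_ge hr)

lemma K_le {r : ℝ} (hr : r^2 < 1) : K r ≤ π/2 / Real.sqrt (1 - r^2) := by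
  have h2 : (0:ℝ) < 1 - r^2 := by linarith
  have : π/2 / Real.sqrt (1 - r^2) = ∫ _ in (0:ℝ)..(π/2), 1 / Real.sqrt (1 - r^2) := by
    simp [div_eq_mul_inv, mul_comm]
  rw [this, K]
  apply intervalIntegral.integral_mono_on (by positivity) (intbleK hr)
    (by simp [_root_.intervalIntegrable_const])
  intro θ _
  apply div_le_div_of_nonneg_left one_pos.le (Real.sqrt_pos.mpr h2)
  apply Real.sqrt_le_sqrt
  nlinarith [sq_nonneg r, Real.sin_sq_le_one θ]

lemma E_le {r : ℝ} : E r ≤ π/2 := by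
  have : π/2 = ∫ _ in (0:ℝ)..(π/2), (1:ℝ) := by simp
  rw [this, E]
  apply intervalIntegral.integral_mono_on (by positivity) (intbleE r)
    (by simp [_root_.intervalIntegrable_const])
  intro θ _
  exact Real.sqrt_le_one.mpr (radicand_le_one θ)



lemma sin_pi_div_four_sq : Real.sin (π/4) ^ 2 = 1/2 := by
  rw [Real.sin_pi_div_four, div_pow, Real.sq_sqrt (by norm_num : (0:ℝ) ≤ 2)]
  norm_num

lemma K_strictMonoOn {a b : ℝ} (ha : 0 ≤ a) (hab : a < b) (hb : b < 1) : K a < K b := by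
  have ha1 : a^2 < 1 := by nlinarith
  have hb1 : b^2 < 1 := by nlinarith
  rw [K, K]
  apply intervalIntegral.integral_lt_integral_of_continuousOn_of_le_of_exists_lt
    (by positivity) (contK ha1).continuousOn (contK hb1).continuousOn
  · intro θ _
    have h2 := radicand_pos hb1 θ
    apply div_le_div_of_nonneg_left one_pos.le (Real.sqrt_pos.mpr h2)
    apply Real.sqrt_le_sqrt
    have hab2 : a^2 ≤ b^2 := by nlinarith
    nlinarith [mul_le_mul_of_nonneg_right hab2 (sq_nonneg (Real.sin θ))]
  · refine ⟨π/4, ⟨by positivity, by linarith [Real.pi_pos]⟩, ?_⟩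
    have h2 := radicand_pos hb1 (π/4)
    apply div_lt_div_of_pos_left one_pos (Real.sqrt_pos.mpr h2)
    apply Real.sqrt_lt_sqrt h2.le
    rw [sin_pi_div_four_sq]
    nlinarith

lemma E_strictAntiOn {a b : ℝ} (ha : 0 ≤ a) (hab : a < b) (hb : b < 1) : E b < E a := by
  have ha1 : a^2 < 1 := by nlinarith
  have hb1 : b^2 < 1 := by nlinarith
  rw [E, E]
  apply intervalIntegral.integral_lt_integral_of_continuousOn_of_le_of_exists_lt
    (by positivity) (contE b).continuousOn (contE a).continuousOn
  · intro θ _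
    apply Real.sqrt_le_sqrt
    have hab2 : a^2 ≤ b^2 := by nlinarith
    nlinarith [mul_le_mul_of_nonneg_right hab2 (sq_nonneg (Real.sin θ))]
  · refine ⟨π/4, ⟨by positivity, by linarith [Real.pi_pos]⟩, ?_⟩
    apply Real.sqrt_lt_sqrt (radicand_pos hb1 (π/4)).le
    rw [sin_pi_div_four_sq]
    nlinarith

lemma E_lt_K {r : ℝ} (h0 : 0 < r) (h1 : r < 1) : E r < K r := by
  have hr1 : r^2 < 1 := by nlinarith
  rw [E, K]
  apply intervalIntegral.integral_lt_integral_of_continuousOn_of_le_of_exists_lt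
    (by positivity) (contE r).continuousOn (contK hr1).continuousOn
  · intro θ _
    have h2 := radicand_pos hr1 θ
    have hs := Real.sqrt_pos.mpr h2
    rw [le_div_iff₀ hs, Real.mul_self_sqrt h2.le]
    nlinarith [sq_nonneg r, sq_nonneg (Real.sin θ)]
  · refine ⟨π/4, ⟨by positivity, by linarith [Real.pi_pos]⟩, ?_⟩
    have h2 := radicand_pos hr1 (π/4)
    have hs := Real.sqrt_pos.mpr h2
    rw [lt_div_iff₀ hs, Real.mul_self_sqrt h2.le, sin_pi_div_four_sq]
    nlinarith

lemma E_gt_one {r : ℝ} (h0 : 0 < r) (h1 : r < 1) : 1 < E r := by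
  have hr1 : r^2 < 1 := by nlinarith
  have hcos : (1:ℝ) = ∫ θ in (0:ℝ)..(π/2), Real.cos θ := by
    rw [_root_.integral_cos]; simp
  rw [hcos, E]
  apply intervalIntegral.integral_lt_integral_of_continuousOn_of_le_of_exists_lt
    (by positivity) Real.continuous_cos.continuousOn (contE r).continuousOn
  · intro θ hθ
    have hc : 0 ≤ Real.cos θ := Real.cos_nonneg_of_mem_Icc
      ⟨by linarith [hθ.1, Real.pi_pos], hθ.2⟩
    rw [show Real.cos θ = Real.sqrt (Real.cos θ ^ 2) by
      rw [Real.sqrt_sq hc]]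
    apply Real.sqrt_le_sqrt
    have : Real.cos θ ^ 2 = 1 - Real.sin θ ^ 2 := by
      nlinarith [Real.sin_sq_add_cos_sq θ]
    rw [this]
    nlinarith [sq_nonneg (Real.sin θ)]
  · refine ⟨π/2, ⟨by positivity, le_refl _⟩, ?_⟩
    rw [Real.cos_pi_div_two]
    apply Real.sqrt_pos.mpr
    exact radicand_pos hr1 _



lemma hasDerivAt_E_integrand (θ : ℝ) {x : ℝ} (hx : x^2 < 1) :
    HasDerivAt (fun r : ℝ => Real.sqrt (1 - r^2 * Real.sin θ ^ 2))
      (-(x * Real.sin θ ^ 2) / Real.sqrt (1 - x^2 * Real.sin θ ^ 2)) x := by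
  have hpos := radicand_pos hx θ
  have h1 : HasDerivAt (fun r : ℝ => 1 - r^2 * Real.sin θ ^ 2)
      (-(2 * x * Real.sin θ ^ 2)) x := by
    have := ((hasDerivAt_pow 2 x).mul_const (Real.sin θ ^ 2)).const_sub 1
    simpa using this.congr_deriv (by ring)
  have h2 := (Real.hasDerivAt_sqrt hpos.ne').comp x h1
  refine h2.congr_deriv (Eq.symm ?_)
  have hs := Real.sqrt_pos.mpr hpos
  field_simp

lemma hasDerivAt_K_integrand (θ : ℝ) {x : ℝ} (hx : x^2 < 1) :
    HasDerivAt (fun r : ℝ => 1 / Real.sqrt (1 - r^2 * Real.sin θ ^ 2))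
      (x * Real.sin θ ^ 2 /
        ((1 - x^2 * Real.sin θ ^ 2) * Real.sqrt (1 - x^2 * Real.sin θ ^ 2))) x := by
  have hpos := radicand_pos hx θ
  have hs := Real.sqrt_pos.mpr hpos
  have h1 := (hasDerivAt_E_integrand θ hx).inv hs.ne'
  simp only [one_div]
  refine h1.congr_deriv (Eq.symm ?_)
  rw [Real.sq_sqrt hpos.le]
  simp [neg_div, div_div, mul_comm]

lemma measK (y : ℝ) :
    AEStronglyMeasurable (fun θ : ℝ => 1 / Real.sqrt (1 - y^2 * Real.sin θ ^ 2))
      (volume.restrict (Set.uIoc (0:ℝ) (π/2))) := by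
  apply Measurable.aestronglyMeasurable
  apply Measurable.div measurable_const
  exact (Real.continuous_sqrt.measurable).comp (by measurability)

lemma measKd (y : ℝ) :
    AEStronglyMeasurable (fun θ : ℝ => y * Real.sin θ ^ 2 /
        ((1 - y^2 * Real.sin θ ^ 2) * Real.sqrt (1 - y^2 * Real.sin θ ^ 2)))
      (volume.restrict (Set.uIoc (0:ℝ) (π/2))) := by
  apply Measurable.aestronglyMeasurable
  apply Measurable.div (by measurability)
  exact (by measurability : Measurable fun θ:ℝ => (1 - y^2 * Real.sin θ ^ 2)).mul
    ((Real.continuous_sqrt.measurable).comp (by measurability))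

lemma measE (y : ℝ) :
    AEStronglyMeasurable (fun θ : ℝ => Real.sqrt (1 - y^2 * Real.sin θ ^ 2))
      (volume.restrict (Set.uIoc (0:ℝ) (π/2))) := by
  apply Measurable.aestronglyMeasurable
  exact (Real.continuous_sqrt.measurable).comp (by measurability)

lemma measEd (y : ℝ) :
    AEStronglyMeasurable (fun θ : ℝ => -(y * Real.sin θ ^ 2) /
        Real.sqrt (1 - y^2 * Real.sin θ ^ 2))
      (volume.restrict (Set.uIoc (0:ℝ) (π/2))) := by
  apply Measurable.aestronglyMeasurable
  apply Measurable.div (by measurability)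
  exact (Real.continuous_sqrt.measurable).comp (by measurability)

lemma hasDerivAt_K {x : ℝ} (h0 : 0 < x) (h1 : x < 1) :
    HasDerivAt K (∫ θ in (0:ℝ)..(π/2), x * Real.sin θ ^ 2 /
        ((1 - x^2 * Real.sin θ ^ 2) * Real.sqrt (1 - x^2 * Real.sin θ ^ 2))) x := by
  have hx2 : x^2 < 1 := by nlinarith
  set c : ℝ := (1+x)/2 with hc
  have hc1 : c < 1 := by simp only [hc]; linarith
  have hc0 : 0 < c := by simp only [hc]; linarith
  set δ : ℝ := 1 - c^2 with hδ
  have hδ0 : 0 < δ := by simp only [hδ]; nlinarith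
  set ε : ℝ := (1-x)/2 with hε
  have hε0 : 0 < ε := by simp only [hε]; linarith
  have hball : ∀ y ∈ ball x ε, y^2 < c^2 := by
    intro y hy
    rw [mem_ball, Real.dist_eq] at hy
    have h3 : |y| < c := by
      cases abs_cases (y - x) with
      | inl h => cases abs_cases y with
        | inl hy2 => simp only [hc, hε] at *; cases h with | intro h4 h5 => linarith [hy2.1 ▸ hy]
        | inr hy2 => nlinarith [hy2.1, abs_nonneg y, hy, h.1]
      | inr h => cases abs_cases y with
        | inl hy2 => nlinarith [hy2.1, hy, h.1]
        | inr hy2 => nlinarith [hy2.1, hy, h.1]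
    nlinarith [abs_nonneg y, sq_abs y]
  have key := intervalIntegral.hasDerivAt_integral_of_dominated_loc_of_deriv_le
    (F := fun r θ => 1 / Real.sqrt (1 - r^2 * Real.sin θ ^ 2))
    (F' := fun r θ => r * Real.sin θ ^ 2 /
        ((1 - r^2 * Real.sin θ ^ 2) * Real.sqrt (1 - r^2 * Real.sin θ ^ 2)))
    (x₀ := x) (a := 0) (b := π/2) (μ := volume)
    (bound := fun _ => c / (δ * Real.sqrt δ)) (ball_mem_nhds x hε0)
    (Eventually.of_forall fun y => measK y) (intbleK hx2) (measKd x)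
    ?_ (by apply Continuous.intervalIntegrable; continuity) ?_
  · exact key.2
  · apply ae_of_all
    intro θ _ y hy
    have hy2 : y^2 < c^2 := hball y hy
    have hy1 : y^2 < 1 := by nlinarith
    have hrad : δ ≤ 1 - y^2 * Real.sin θ ^ 2 := by
      simp only [hδ]
      nlinarith [sq_nonneg (Real.sin θ), Real.sin_sq_le_one θ, sq_nonneg y]
    have hradpos := radicand_pos hy1 θ
    rw [Real.norm_eq_abs, abs_div]
    apply div_le_div₀ (by positivity)
    · rw [abs_mul]
      calc |y| * |Real.sin θ ^ 2| ≤ c * 1 := by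
            apply mul_le_mul _ _ (abs_nonneg _) hc0.le
            · rw [← sq_abs] at hy2; nlinarith [abs_nonneg y]
            · rw [abs_of_nonneg (sq_nonneg _)]; exact Real.sin_sq_le_one θ
        _ = c := mul_one c
    · positivity
    · rw [abs_of_nonneg (by positivity)]
      apply mul_le_mul hrad (Real.sqrt_le_sqrt hrad) (Real.sqrt_nonneg _) hradpos.le
  · apply ae_of_all
    intro θ _ y hy
    have hy1 : y^2 < 1 := by nlinarith [hball y hy, sq_nonneg c]
    exact hasDerivAt_K_integrand θ hy1

lemma hasDerivAt_E {x : ℝ} (h0 : 0 < x) (h1 : x < 1) :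
    HasDerivAt E (∫ θ in (0:ℝ)..(π/2),
      -(x * Real.sin θ ^ 2) / Real.sqrt (1 - x^2 * Real.sin θ ^ 2)) x := by
  have hx2 : x^2 < 1 := by nlinarith
  set c : ℝ := (1+x)/2 with hc
  have hc1 : c < 1 := by simp only [hc]; linarith
  have hc0 : 0 < c := by simp only [hc]; linarith
  set δ : ℝ := 1 - c^2 with hδ
  have hδ0 : 0 < δ := by simp only [hδ]; nlinarith
  set ε : ℝ := (1-x)/2 with hε
  have hε0 : 0 < ε := by simp only [hε]; linarith
  have hball : ∀ y ∈ ball x ε, y^2 < c^2 := by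
    intro y hy
    rw [mem_ball, Real.dist_eq] at hy
    have h3 : |y| < c := by
      cases abs_cases (y - x) with
      | inl h => cases abs_cases y with
        | inl hy2 => simp only [hc, hε] at *; cases h with | intro h4 h5 => linarith [hy2.1 ▸ hy]
        | inr hy2 => nlinarith [hy2.1, abs_nonneg y, hy, h.1]
      | inr h => cases abs_cases y with
        | inl hy2 => nlinarith [hy2.1, hy, h.1]
        | inr hy2 => nlinarith [hy2.1, hy, h.1]
    nlinarith [abs_nonneg y, sq_abs y]
  have key := intervalIntegral.hasDerivAt_integral_of_dominated_loc_of_deriv_le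
    (F := fun r θ => Real.sqrt (1 - r^2 * Real.sin θ ^ 2))
    (F' := fun r θ => -(r * Real.sin θ ^ 2) / Real.sqrt (1 - r^2 * Real.sin θ ^ 2))
    (x₀ := x) (a := 0) (b := π/2) (μ := volume)
    (bound := fun _ => c / Real.sqrt δ) (ball_mem_nhds x hε0)
    (Eventually.of_forall fun y => measE y) (intbleE x) (measEd x)
    ?_ (by apply Continuous.intervalIntegrable; continuity) ?_
  · exact key.2
  · apply ae_of_all
    intro θ _ y hy
    have hy2 : y^2 < c^2 := hball y hy
    have hy1 : y^2 < 1 := by nlinarith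
    have hrad : δ ≤ 1 - y^2 * Real.sin θ ^ 2 := by
      simp only [hδ]
      nlinarith [sq_nonneg (Real.sin θ), Real.sin_sq_le_one θ, sq_nonneg y]
    have hradpos := radicand_pos hy1 θ
    rw [Real.norm_eq_abs, abs_div, abs_neg]
    apply div_le_div₀ (by positivity)
    · rw [abs_mul]
      calc |y| * |Real.sin θ ^ 2| ≤ c * 1 := by
            apply mul_le_mul _ _ (abs_nonneg _) hc0.le
            · rw [← sq_abs] at hy2; nlinarith [abs_nonneg y]
            · rw [abs_of_nonneg (sq_nonneg _)]; exact Real.sin_sq_le_one θ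
        _ = c := mul_one c
    · positivity
    · rw [abs_of_nonneg (Real.sqrt_nonneg _)]
      exact Real.sqrt_le_sqrt hrad
  · apply ae_of_all
    intro θ _ y hy
    have hy1 : y^2 < 1 := by nlinarith [hball y hy, sq_nonneg c]
    exact hasDerivAt_E_integrand θ hy1



lemma cont_sin2 {x : ℝ} (hx : x^2 < 1) :
    Continuous (fun θ : ℝ => Real.sin θ ^ 2 / Real.sqrt (1 - x^2 * Real.sin θ ^ 2)) := by
  apply Continuous.div (by continuity) (Real.continuous_sqrt.comp (by continuity))
  intro θ; exact (Real.sqrt_pos.mpr (radicand_pos hx θ)).ne'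

lemma cont_sin2d {x : ℝ} (hx : x^2 < 1) :
    Continuous (fun θ : ℝ => Real.sin θ ^ 2 /
      ((1 - x^2 * Real.sin θ ^ 2) * Real.sqrt (1 - x^2 * Real.sin θ ^ 2))) := by
  apply Continuous.div (by continuity)
  · exact Continuous.mul (by continuity) (Real.continuous_sqrt.comp (by continuity))
  · intro θ
    have h := radicand_pos hx θ
    positivity

lemma integral_sin2 {x : ℝ} (h0 : 0 < x) (h1 : x < 1) :
    (∫ θ in (0:ℝ)..(π/2), Real.sin θ ^ 2 / Real.sqrt (1 - x^2 * Real.sin θ ^ 2))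
      = (K x - E x) / x^2 := by
  have hx2 : x^2 < 1 := by nlinarith
  have heq : EqOn (fun θ : ℝ => Real.sin θ ^ 2 / Real.sqrt (1 - x^2 * Real.sin θ ^ 2))
      (fun θ : ℝ => (1/x^2) * (1 / Real.sqrt (1 - x^2 * Real.sin θ ^ 2)
        - Real.sqrt (1 - x^2 * Real.sin θ ^ 2))) (uIcc 0 (π/2)) := by
    intro θ _
    have hpos := radicand_pos hx2 θ
    have hs := Real.sqrt_pos.mpr hpos
    have hsq := Real.sq_sqrt hpos.le
    field_simp
    rw [Real.sq_sqrt (x := 1 - Real.sin θ ^ 2 * x ^ 2) (by nlinarith)]; ring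
  rw [intervalIntegral.integral_congr heq, intervalIntegral.integral_const_mul,
    intervalIntegral.integral_sub (intbleK hx2) (intbleE x)]
  rw [← K, ← E]
  field_simp
lemma integral_Ed {x : ℝ} (h0 : 0 < x) (h1 : x < 1) :
    (∫ θ in (0:ℝ)..(π/2), -(x * Real.sin θ ^ 2) / Real.sqrt (1 - x^2 * Real.sin θ ^ 2))
      = (E x - K x) / x := by
  have hx2 : x^2 < 1 := by nlinarith
  have heq : EqOn (fun θ : ℝ => -(x * Real.sin θ ^ 2) / Real.sqrt (1 - x^2 * Real.sin θ ^ 2))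
      (fun θ : ℝ => (-x) * (Real.sin θ ^ 2 / Real.sqrt (1 - x^2 * Real.sin θ ^ 2)))
      (uIcc 0 (π/2)) := by
    intro θ _
    simp [neg_div, mul_div_assoc, neg_mul]
  rw [intervalIntegral.integral_congr heq, intervalIntegral.integral_const_mul,
    integral_sin2 h0 h1]
  field_simp
  ring

lemma hasDerivAt_E_closed {x : ℝ} (h0 : 0 < x) (h1 : x < 1) :
    HasDerivAt E ((E x - K x) / x) x := by
  have := hasDerivAt_E h0 h1
  rwa [integral_Ed h0 h1] at this

-- FTC identity
lemma ftc_identity {x : ℝ} (hx2 : x^2 < 1) :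
    (∫ θ in (0:ℝ)..(π/2), ((1-x^2) * (Real.sin θ ^ 2 /
        ((1 - x^2 * Real.sin θ ^ 2) * Real.sqrt (1 - x^2 * Real.sin θ ^ 2)))
      - Real.cos θ ^ 2 / Real.sqrt (1 - x^2 * Real.sin θ ^ 2))) = 0 := by
  have hderiv : ∀ θ ∈ uIcc (0:ℝ) (π/2),
      HasDerivAt (fun t : ℝ => -(Real.sin t * Real.cos t) / Real.sqrt (1 - x^2 * Real.sin t ^ 2))
        ((1-x^2) * (Real.sin θ ^ 2 /
          ((1 - x^2 * Real.sin θ ^ 2) * Real.sqrt (1 - x^2 * Real.sin θ ^ 2)))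
        - Real.cos θ ^ 2 / Real.sqrt (1 - x^2 * Real.sin θ ^ 2)) θ := by
    intro θ _
    have hpos := radicand_pos hx2 θ
    have hs := Real.sqrt_pos.mpr hpos
    have d1 : HasDerivAt (fun t : ℝ => -(Real.sin t * Real.cos t))
        (-(Real.cos θ ^ 2 - Real.sin θ ^ 2)) θ := by
      have := ((Real.hasDerivAt_sin θ).mul (Real.hasDerivAt_cos θ)).neg
      refine this.congr_deriv (Eq.symm ?_); ring
    have d2 : HasDerivAt (fun t : ℝ => 1 - x^2 * Real.sin t ^ 2)
        (-(x^2 * (2 * Real.sin θ * Real.cos θ))) θ := by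
      have := (((Real.hasDerivAt_sin θ).pow 2).const_mul (x^2)).const_sub 1
      refine this.congr_deriv (Eq.symm ?_); ring
    have d3 := (Real.hasDerivAt_sqrt hpos.ne').comp θ d2
    have d4 := d3.inv hs.ne'
    have d5 := d1.mul d4
    have goalrw : (fun t : ℝ => -(Real.sin t * Real.cos t) / Real.sqrt (1 - x^2 * Real.sin t ^ 2))
        = fun t : ℝ => -(Real.sin t * Real.cos t) * (Real.sqrt (1 - x^2 * Real.sin t ^ 2))⁻¹ := by
      funext t; rw [div_eq_mul_inv]
    rw [goalrw]
    refine d5.congr_deriv (Eq.symm ?_)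
    have hsq := Real.sq_sqrt hpos.le
    have hpyth := Real.sin_sq_add_cos_sq θ
    simp only [Pi.inv_apply, Function.comp_apply]
    field_simp
    linear_combination (x^2 * Real.sin θ^2 * (Real.sin θ^2 - 1)) * hsq
      + ((1 - x^2*Real.sin θ^2) * x^2 * Real.sin θ^2) * hpyth
  have hint : IntervalIntegrable (fun θ : ℝ => (1-x^2) * (Real.sin θ ^ 2 /
        ((1 - x^2 * Real.sin θ ^ 2) * Real.sqrt (1 - x^2 * Real.sin θ ^ 2)))
      - Real.cos θ ^ 2 / Real.sqrt (1 - x^2 * Real.sin θ ^ 2)) volume 0 (π/2) := by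
    apply Continuous.intervalIntegrable
    apply Continuous.sub (continuous_const.mul (cont_sin2d hx2))
    apply Continuous.div (by continuity) (Real.continuous_sqrt.comp (by continuity))
    intro θ; exact (Real.sqrt_pos.mpr (radicand_pos hx2 θ)).ne'
  rw [intervalIntegral.integral_eq_sub_of_hasDerivAt hderiv hint]
  simp



lemma cont_cos2 {x : ℝ} (hx : x^2 < 1) :
    Continuous (fun θ : ℝ => Real.cos θ ^ 2 / Real.sqrt (1 - x^2 * Real.sin θ ^ 2)) := by
  apply Continuous.div (by continuity) (Real.continuous_sqrt.comp (by continuity))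
  intro θ; exact (Real.sqrt_pos.mpr (radicand_pos hx θ)).ne'

lemma integral_cos2 {x : ℝ} (h0 : 0 < x) (h1 : x < 1) :
    (∫ θ in (0:ℝ)..(π/2), Real.cos θ ^ 2 / Real.sqrt (1 - x^2 * Real.sin θ ^ 2))
      = K x - (K x - E x) / x^2 := by
  have hx2 : x^2 < 1 := by nlinarith
  have heq : EqOn (fun θ : ℝ => Real.cos θ ^ 2 / Real.sqrt (1 - x^2 * Real.sin θ ^ 2))
      (fun θ : ℝ => 1 / Real.sqrt (1 - x^2 * Real.sin θ ^ 2)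
        - Real.sin θ ^ 2 / Real.sqrt (1 - x^2 * Real.sin θ ^ 2)) (uIcc 0 (π/2)) := by
    intro θ _
    have hpyth := Real.sin_sq_add_cos_sq θ
    simp only
    rw [div_sub_div_same]
    congr 1
    linarith
  rw [intervalIntegral.integral_congr heq,
    intervalIntegral.integral_sub (intbleK hx2) ((cont_sin2 hx2).intervalIntegrable _ _),
    integral_sin2 h0 h1, ← K]

lemma integral_sin2d {x : ℝ} (h0 : 0 < x) (h1 : x < 1) :
    (∫ θ in (0:ℝ)..(π/2), Real.sin θ ^ 2 /
        ((1 - x^2 * Real.sin θ ^ 2) * Real.sqrt (1 - x^2 * Real.sin θ ^ 2)))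
      = (K x - (K x - E x) / x^2) / (1 - x^2) := by
  have hx2 : x^2 < 1 := by nlinarith
  have h12 : (0:ℝ) < 1 - x^2 := by linarith
  have hsplit := ftc_identity hx2
  rw [intervalIntegral.integral_sub
    (show IntervalIntegrable (fun θ : ℝ => (1-x^2) * (Real.sin θ ^ 2 /
      ((1 - x^2 * Real.sin θ ^ 2) * Real.sqrt (1 - x^2 * Real.sin θ ^ 2)))) volume 0 (π/2) from
      (continuous_const.mul (cont_sin2d hx2)).intervalIntegrable _ _)
    ((cont_cos2 hx2).intervalIntegrable _ _),
    intervalIntegral.integral_const_mul, integral_cos2 h0 h1, sub_eq_zero] at hsplit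
  field_simp at hsplit ⊢
  linarith [hsplit]

lemma hasDerivAt_K_closed {x : ℝ} (h0 : 0 < x) (h1 : x < 1) :
    HasDerivAt K ((E x - (1 - x^2) * K x) / (x * (1 - x^2))) x := by
  have hx2 : x^2 < 1 := by nlinarith
  have h12 : (0:ℝ) < 1 - x^2 := by linarith
  have h := hasDerivAt_K h0 h1
  have heq : EqOn (fun θ : ℝ => x * Real.sin θ ^ 2 /
        ((1 - x^2 * Real.sin θ ^ 2) * Real.sqrt (1 - x^2 * Real.sin θ ^ 2)))
      (fun θ : ℝ => x * (Real.sin θ ^ 2 /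
        ((1 - x^2 * Real.sin θ ^ 2) * Real.sqrt (1 - x^2 * Real.sin θ ^ 2)))) (uIcc 0 (π/2)) := by
    intro θ _; simp only [mul_div_assoc]
  rw [intervalIntegral.integral_congr heq, intervalIntegral.integral_const_mul,
    integral_sin2d h0 h1] at h
  convert h using 1
  field_simp
  ring

lemma sqrt_mem {x : ℝ} (h0 : 0 < x) (h1 : x < 1) :
    0 < Real.sqrt (1 - x^2) ∧ Real.sqrt (1 - x^2) < 1 ∧ Real.sqrt (1 - x^2)^2 = 1 - x^2 := by
  have h12 : (0:ℝ) < 1 - x^2 := by nlinarith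
  refine ⟨Real.sqrt_pos.mpr h12, ?_, Real.sq_sqrt h12.le⟩
  have h2 : Real.sqrt (1 - x^2) < Real.sqrt 1 := Real.sqrt_lt_sqrt h12.le (by nlinarith)
  simpa using h2

lemma hasDerivAt_s {x : ℝ} (h0 : 0 < x) (h1 : x < 1) :
    HasDerivAt (fun r : ℝ => Real.sqrt (1 - r^2)) (-x / Real.sqrt (1 - x^2)) x := by
  have h12 : (0:ℝ) < 1 - x^2 := by nlinarith
  have d1 : HasDerivAt (fun r : ℝ => 1 - r^2) (-(2*x)) x := by
    have := (hasDerivAt_pow 2 x).const_sub 1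
    simpa using this
  have := (Real.hasDerivAt_sqrt h12.ne').comp x d1
  refine this.congr_deriv (Eq.symm ?_)
  have hs := Real.sqrt_pos.mpr h12
  field_simp

lemma hasDerivAt_K'_closed {x : ℝ} (h0 : 0 < x) (h1 : x < 1) :
    HasDerivAt K' (-((E' x - x^2 * K' x) / (x * (1 - x^2)))) x := by
  obtain ⟨hs0, hs1, hs2⟩ := sqrt_mem h0 h1
  have h12 : (0:ℝ) < 1 - x^2 := by nlinarith
  have hd := (hasDerivAt_K_closed hs0 hs1).comp x (hasDerivAt_s h0 h1)
  have : K' = K ∘ (fun r : ℝ => Real.sqrt (1 - r^2)) := rfl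
  rw [this]
  refine hd.congr_deriv (Eq.symm ?_)
  rw [hs2]
  show -((E' x - x^2 * K' x) / (x * (1 - x^2)))
    = (E (Real.sqrt (1-x^2)) - (1 - (1-x^2)) * K (Real.sqrt (1-x^2)))
      / (Real.sqrt (1-x^2) * (1 - (1-x^2))) * (-x / Real.sqrt (1-x^2))
  rw [show E (Real.sqrt (1-x^2)) = E' x from rfl, show K (Real.sqrt (1-x^2)) = K' x from rfl]
  have : Real.sqrt (1-x^2) * Real.sqrt (1-x^2) = 1 - x^2 := Real.mul_self_sqrt h12.le
  field_simp
  linear_combination (x^4*K' x - x^2*E' x) * hs2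

lemma hasDerivAt_m {x : ℝ} (h0 : 0 < x) (h1 : x < 1) :
    HasDerivAt m ((2/π) * (E x * K' x - E' x * K x - K x * K' x) / x) x := by
  have h12 : (0:ℝ) < 1 - x^2 := by nlinarith
  have d1 : HasDerivAt (fun r : ℝ => (2/π) * (1 - r^2)) ((2/π) * (-(2*x))) x := by
    have := ((hasDerivAt_pow 2 x).const_sub 1).const_mul (2/π)
    simpa using this
  have d2 := (d1.mul (hasDerivAt_K_closed h0 h1)).mul (hasDerivAt_K'_closed h0 h1)
  have : m = fun r : ℝ => ((2/π) * (1 - r^2) * K r) * K' r := by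
    funext r; rw [m]
  rw [this]
  refine d2.congr_deriv (Eq.symm ?_)
  have hπ := Real.pi_pos
  simp only [Pi.mul_apply]
  field_simp
  ring



lemma sq_lt_one' {x : ℝ} (h0 : 0 < x) (h1 : x < 1) : x^2 < 1 := by nlinarith

lemma K'_pos {x : ℝ} (h0 : 0 < x) (h1 : x < 1) : 0 < K' x := by
  obtain ⟨hs0, hs1, hs2⟩ := sqrt_mem h0 h1
  exact K_pos (by rw [hs2]; nlinarith)

lemma E'_gt_one {x : ℝ} (h0 : 0 < x) (h1 : x < 1) : 1 < E' x := by
  obtain ⟨hs0, hs1, _⟩ := sqrt_mem h0 h1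
  exact E_gt_one hs0 hs1

lemma E'_le {x : ℝ} : E' x ≤ π/2 := E_le

lemma K'_le {x : ℝ} (h0 : 0 < x) (h1 : x < 1) : K' x ≤ π/2 / x := by
  obtain ⟨hs0, hs1, hs2⟩ := sqrt_mem h0 h1
  have := K_le (r := Real.sqrt (1 - x^2)) (by rw [hs2]; nlinarith)
  rwa [hs2, show Real.sqrt (1 - (1 - x^2)) = x by
    rw [show (1 - (1 - x^2)) = x^2 by ring, Real.sqrt_sq h0.le]] at this

lemma m_pos {x : ℝ} (h0 : 0 < x) (h1 : x < 1) : 0 < m x := by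
  have h12 : (0:ℝ) < 1 - x^2 := by nlinarith
  have := K_pos (sq_lt_one' h0 h1)
  have := K'_pos h0 h1
  have := Real.pi_pos
  rw [m]; positivity

lemma m_strictAntiOn : StrictAntiOn m (Ioo (0:ℝ) 1) := by
  apply strictAntiOn_of_deriv_neg (convex_Ioo 0 1)
  · intro x hx
    exact (hasDerivAt_m hx.1 hx.2).continuousAt.continuousWithinAt
  · intro x hx
    rw [interior_Ioo] at hx
    rw [(hasDerivAt_m hx.1 hx.2).deriv]
    have h1 := E_lt_K hx.1 hx.2
    have h2 := K'_pos hx.1 hx.2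
    have h3 := E'_gt_one hx.1 hx.2
    have h4 := K_pos (sq_lt_one' hx.1 hx.2)
    have h5 := Real.pi_pos
    apply div_neg_of_neg_of_pos _ hx.1
    apply mul_neg_of_pos_of_neg (by positivity)
    nlinarith
-- denominator
lemma D_gt {x : ℝ} (h0 : 0 < x) (h1 : x < 1) : π < 4 * E' x * K x - π := by
  have h2 := E'_gt_one h0 h1
  have h3 := K_ge (sq_lt_one' h0 h1)
  have h4 := Real.pi_pos
  nlinarith

lemma D_strictMono {a b : ℝ} (ha : a ∈ Ioo (0:ℝ) 1) (hb : b ∈ Ioo (0:ℝ) 1) (hab : a < b) :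
    4 * E' a * K a - π < 4 * E' b * K b - π := by
  have hEa := E'_gt_one ha.1 ha.2
  have hKa := K_pos (sq_lt_one' ha.1 ha.2)
  have hE : E' a < E' b := by
    obtain ⟨ha0, ha1, ha2⟩ := sqrt_mem ha.1 ha.2
    obtain ⟨hb0, hb1, hb2⟩ := sqrt_mem hb.1 hb.2
    apply E_strictAntiOn hb0.le _ ha1
    apply Real.sqrt_lt_sqrt (by nlinarith [hb.1, hb.2])
    nlinarith [ha.1, hb.1]
  have hK : K a < K b := K_strictMonoOn ha.1.le hab hb.2
  nlinarith

lemma f_strictAntiOn :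
    StrictAntiOn (fun r : ℝ => m r / (4 * E' r * K r - π)) (Ioo (0:ℝ) 1) := by
  intro a ha b hb hab
  have h1 : m b < m a := m_strictAntiOn ha hb hab
  have h2 : 0 < m b := m_pos hb.1 hb.2
  have h3 := D_gt ha.1 ha.2
  have h4 := D_gt hb.1 hb.2
  have h5 := D_strictMono ha hb hab
  have h6 := Real.pi_pos
  dsimp only
  exact div_lt_div₀ h1 h5.le (by linarith [m_pos ha.1 ha.2]) (by linarith)

-- log lower bound for K
lemma K_lower {s : ℝ} (h0 : 0 < s) (h1 : s < 1) :
    Real.log (Real.sqrt (1 - s^2) + π/2) - Real.log (Real.sqrt (1 - s^2)) ≤ K s := by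
  obtain ⟨hc0, hc1, hc2⟩ := sqrt_mem h0 h1
  set c := Real.sqrt (1 - s^2) with hc
  have hπ := Real.pi_pos
  have hs2 := sq_lt_one' h0 h1
  have hle : ∀ θ ∈ Icc (0:ℝ) (π/2),
      1 / (c + (π/2 - θ)) ≤ 1 / Real.sqrt (1 - s^2 * Real.sin θ ^ 2) := by
    intro θ hθ
    have hcos : 0 ≤ Real.cos θ := Real.cos_nonneg_of_mem_Icc ⟨by linarith [hθ.1], hθ.2⟩
    have hrad := radicand_pos hs2 θ
    have hsq : Real.sqrt (1 - s^2 * Real.sin θ ^ 2) ≤ c + Real.cos θ := by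
      rw [show c + Real.cos θ = Real.sqrt ((c + Real.cos θ)^2) by
        rw [Real.sqrt_sq (by positivity)]]
      apply Real.sqrt_le_sqrt
      have hpyth := Real.sin_sq_add_cos_sq θ
      nlinarith [sq_nonneg s, mul_nonneg hc0.le hcos, sq_nonneg (Real.sin θ)]
    have hcos2 : Real.cos θ ≤ π/2 - θ := by
      rw [← Real.sin_pi_div_two_sub]
      exact Real.sin_le (by linarith [hθ.2])
    apply one_div_le_one_div_of_le (Real.sqrt_pos.mpr hrad)
    linarith
  have hint1 : IntervalIntegrable (fun θ : ℝ => 1 / (c + (π/2 - θ))) volume 0 (π/2) := by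
    apply ContinuousOn.intervalIntegrable
    apply ContinuousOn.div continuousOn_const (by fun_prop)
    intro θ hθ
    rw [uIcc_of_le (by linarith)] at hθ
    have hgt : (0:ℝ) < c + (π/2 - θ) := by linarith [hθ.2, hc0]
    exact hgt.ne'
  have hmono := intervalIntegral.integral_mono_on (by positivity) hint1 (intbleK hs2) hle
  refine le_trans (le_of_eq ?_) hmono
  have hftc : ∀ θ ∈ uIcc (0:ℝ) (π/2),
      HasDerivAt (fun t : ℝ => -Real.log (c + (π/2 - t))) (1 / (c + (π/2 - θ))) θ := by
    intro θ hθ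
    rw [uIcc_of_le (by linarith)] at hθ
    have hpos : 0 < c + (π/2 - θ) := by linarith [hθ.2, hc0]
    have d1 : HasDerivAt (fun t : ℝ => c + (π/2 - t)) (-1) θ := by
      simpa using ((hasDerivAt_id θ).const_sub (π/2)).const_add c
    have := ((d1.log hpos.ne').neg)
    refine this.congr_deriv (Eq.symm ?_)
    field_simp
  rw [intervalIntegral.integral_eq_sub_of_hasDerivAt hftc hint1]
  simp [hπ.le]
  ring



lemma sqrt_one_sub_sqrt {r : ℝ} (h0 : 0 < r) (h1 : r < 1) :
    Real.sqrt (1 - Real.sqrt (1 - r^2)^2) = r := by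
  obtain ⟨hs0, hs1, hs2⟩ := sqrt_mem h0 h1
  rw [hs2, show (1 - (1 - r^2)) = r^2 by ring, Real.sqrt_sq h0.le]

lemma K'_lower {r : ℝ} (h0 : 0 < r) (h1 : r < 1) :
    Real.log (r + π/2) - Real.log r ≤ K' r := by
  obtain ⟨hs0, hs1, _⟩ := sqrt_mem h0 h1
  have := K_lower hs0 hs1
  rwa [sqrt_one_sub_sqrt h0 h1] at this

lemma f_cont : ContinuousOn (fun r : ℝ => m r / (4 * E' r * K r - π)) (Ioo (0:ℝ) 1) := by
  intro x hx
  apply ContinuousAt.continuousWithinAt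
  have h1 : ContinuousAt m x := (hasDerivAt_m hx.1 hx.2).continuousAt
  have h2 : ContinuousAt K x := (hasDerivAt_K_closed hx.1 hx.2).continuousAt
  have h3 : ContinuousAt E' x := by
    obtain ⟨hs0, hs1, _⟩ := sqrt_mem hx.1 hx.2
    have hE : ContinuousAt E (Real.sqrt (1 - x^2)) := (hasDerivAt_E_closed hs0 hs1).continuousAt
    have hg : ContinuousAt (fun r : ℝ => Real.sqrt (1 - r^2)) x :=
      (Real.continuous_sqrt.comp (by continuity)).continuousAt
    exact ContinuousAt.comp (g := E) (f := fun r : ℝ => Real.sqrt (1 - r^2)) hE hg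
  apply h1.div (((h3.const_mul 4).mul h2).sub continuousAt_const)
  have := D_gt hx.1 hx.2
  have := Real.pi_pos
  show 4 * E' x * K x - π ≠ 0
  linarith

lemma f_tendsto_top :
    Tendsto (fun r : ℝ => m r / (4 * E' r * K r - π)) (𝓝[>] (0:ℝ)) atTop := by
  have hπ := Real.pi_pos
  set g : ℝ → ℝ := fun r => ((1 - r^2) / (2*π^2)) * (Real.log (π/2 + r) + -Real.log r)
    with hg
  have hgt : Tendsto g (𝓝[>] (0:ℝ)) atTop := by
    apply Filter.Tendsto.pos_mul_atTop (show (0:ℝ) < (1 - 0^2)/(2*π^2) by positivity)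
    · apply tendsto_nhdsWithin_of_tendsto_nhds
      exact (Continuous.tendsto (by continuity) 0)
    · apply Filter.Tendsto.add_atTop
      · apply tendsto_nhdsWithin_of_tendsto_nhds
        have : ContinuousAt (fun r : ℝ => Real.log (π/2 + r)) 0 := by
          apply ContinuousAt.log (Continuous.continuousAt (by continuity))
          positivity
        exact this.tendsto
      · exact tendsto_neg_atBot_atTop.comp Real.tendsto_log_nhdsGT_zero
  apply tendsto_atTop_mono' _ _ hgt
  filter_upwards [Ioo_mem_nhdsGT (show (0:ℝ) < 1/2 by norm_num)] with r hr
  have h0 : 0 < r := hr.1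
  have h1 : r < 1 := by linarith [hr.2]
  have hr2 : r^2 < 1 := sq_lt_one' h0 h1
  have hKpos := K_pos hr2
  have hK'pos := K'_pos h0 h1
  have hKge := K_ge hr2
  have hlog : 0 < Real.log (π/2 + r) - Real.log r :=
    sub_pos.mpr (Real.log_lt_log h0 (by linarith))
  have hm : (1 - r^2) * (Real.log (π/2 + r) - Real.log r) ≤ m r := by
    have h12 : (0:ℝ) < 1 - r^2 := by nlinarith
    have hK'low := K'_lower h0 h1
    have step1 : (1 - r^2) * (Real.log (π/2 + r) - Real.log r) ≤ (1 - r^2) * K' r := by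
      apply mul_le_mul_of_nonneg_left _ h12.le
      calc Real.log (π/2 + r) - Real.log r = Real.log (r + π/2) - Real.log r := by ring_nf
        _ ≤ K' r := hK'low
    refine step1.trans ?_
    rw [m]
    have : (2/π) * (1 - r^2) * K r * K' r = ((2/π) * K r) * ((1 - r^2) * K' r) := by ring
    rw [this]
    nth_rewrite 1 [show (1 - r^2) * K' r = 1 * ((1 - r^2) * K' r) by ring]
    apply mul_le_mul_of_nonneg_right _ (by positivity)
    rw [show (1:ℝ) = (2/π) * (π/2) by field_simp]
    apply mul_le_mul_of_nonneg_left hKge (by positivity)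
  have hD : 4 * E' r * K r - π ≤ 2*π^2 := by
    have hE' := E'_le (x := r)
    have hK : K r ≤ π := by
      have := K_le hr2
      have hs : (1:ℝ)/2 ≤ Real.sqrt (1 - r^2) := by
        rw [show (1:ℝ)/2 = Real.sqrt (1/4) by
          rw [show (1:ℝ)/4 = (1/2)^2 by norm_num, Real.sqrt_sq]; norm_num]
        apply Real.sqrt_le_sqrt
        nlinarith [hr.2, hr.1]
      calc K r ≤ π/2 / Real.sqrt (1 - r^2) := this
        _ ≤ π/2 / (1/2) := by
            apply div_le_div_of_nonneg_left (by positivity) (by norm_num) hs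
        _ = π := by ring
    have hE'pos : (0:ℝ) < E' r := lt_trans one_pos (E'_gt_one h0 h1)
    nlinarith
  have hDpos : 0 < 4 * E' r * K r - π := lt_trans hπ (D_gt h0 h1)
  have hmpos := m_pos h0 h1
  calc g r = ((1 - r^2) * (Real.log (π/2 + r) - Real.log r)) / (2*π^2) := by
        rw [hg]; ring
    _ ≤ m r / (2*π^2) := (div_le_div_iff_of_pos_right (by positivity)).mpr hm
    _ ≤ m r / (4 * E' r * K r - π) := by
        apply div_le_div_of_nonneg_left hmpos.le hDpos hD

lemma f_tendsto_zero :
    Tendsto (fun r : ℝ => m r / (4 * E' r * K r - π)) (𝓝[<] (1:ℝ)) (𝓝 0) := by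
  have hπ := Real.pi_pos
  apply tendsto_of_tendsto_of_tendsto_of_le_of_le' (g := fun _ : ℝ => (0:ℝ))
    (h := fun r : ℝ => Real.sqrt (1 - r^2)) tendsto_const_nhds
  · apply tendsto_nhdsWithin_of_tendsto_nhds
    have hc : Continuous (fun r : ℝ => Real.sqrt (1 - r^2)) :=
      Real.continuous_sqrt.comp (by continuity)
    have := hc.tendsto 1
    simpa using this
  · filter_upwards [Ioo_mem_nhdsLT (show (1:ℝ)/2 < 1 by norm_num)] with r hr
    have h0 : 0 < r := lt_trans (by norm_num) hr.1
    have hDpos : 0 < 4 * E' r * K r - π := lt_trans hπ (D_gt h0 hr.2)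
    exact (div_pos (m_pos h0 hr.2) hDpos).le
  · filter_upwards [Ioo_mem_nhdsLT (show (1:ℝ)/2 < 1 by norm_num)] with r hr
    have h0 : 0 < r := lt_trans (by norm_num) hr.1
    have h1 : r < 1 := hr.2
    obtain ⟨hu0, hu1, hu2⟩ := sqrt_mem h0 h1
    set u := Real.sqrt (1 - r^2) with hu
    have hr2 : r^2 < 1 := sq_lt_one' h0 h1
    have hKpos := K_pos hr2
    have hK'pos := K'_pos h0 h1
    have hm : m r ≤ π * u := by
      have step1 : m r ≤ (2/π) * (1 - r^2) * (π/2/u) * (π/2/r) := by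
        rw [m]
        have hA : (2/π) * (1 - r^2) * K r ≤ (2/π) * (1 - r^2) * (π/2/u) := by
          have h12 : (0:ℝ) ≤ 1 - r^2 := by nlinarith
          apply mul_le_mul_of_nonneg_left (K_le hr2) (by positivity)
        calc (2/π) * (1 - r^2) * K r * K' r ≤ (2/π) * (1 - r^2) * (π/2/u) * K' r :=
              mul_le_mul_of_nonneg_right hA hK'pos.le
          _ ≤ (2/π) * (1 - r^2) * (π/2/u) * (π/2/r) := by
              apply mul_le_mul_of_nonneg_left (K'_le h0 h1)
              have : (0:ℝ) < 1 - r^2 := by nlinarith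
              positivity
      refine step1.trans ?_
      have hval : (2/π) * (1 - r^2) * (π/2/u) * (π/2/r) = (π/2) * u / r := by
        rw [← hu2]
        field_simp
      rw [hval]
      calc (π/2) * u / r ≤ (π/2) * u / (1/2) := by
            apply div_le_div_of_nonneg_left (by positivity) (by norm_num) (by linarith [hr.1])
        _ = π * u := by ring
    have hDge : π ≤ 4 * E' r * K r - π := (D_gt h0 h1).le
    calc m r / (4 * E' r * K r - π) ≤ m r / π := by
          apply div_le_div_of_nonneg_left (m_pos h0 h1).le hπ hDge
      _ ≤ (π * u) / π := by
          exact (div_le_div_iff_of_pos_right hπ).mpr hm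
      _ = u := by field_simp

lemma f_image :
    (fun r : ℝ => m r / (4 * E' r * K r - π)) '' Ioo (0:ℝ) 1 = Ioi (0:ℝ) := by
  have hπ := Real.pi_pos
  apply Subset.antisymm
  · rintro y ⟨r, hr, rfl⟩
    exact div_pos (m_pos hr.1 hr.2) (lt_trans hπ (D_gt hr.1 hr.2))
  · intro y hy
    rw [mem_Ioi] at hy
    have h1 : ∀ᶠ r in 𝓝[>] (0:ℝ), y < m r / (4 * E' r * K r - π) :=
      f_tendsto_top.eventually_gt_atTop y
    have h2 : ∀ᶠ r in 𝓝[>] (0:ℝ), r ∈ Ioo (0:ℝ) 1 :=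
      eventually_of_mem (Ioo_mem_nhdsGT one_pos) (fun x hx => hx)
    obtain ⟨a, hya, ha⟩ := (h1.and h2).exists
    have h3 : ∀ᶠ r in 𝓝[<] (1:ℝ), m r / (4 * E' r * K r - π) < y :=
      f_tendsto_zero.eventually_lt_const hy
    have h4 : ∀ᶠ r in 𝓝[<] (1:ℝ), r ∈ Ioo a 1 :=
      eventually_of_mem (Ioo_mem_nhdsLT ha.2) (fun x hx => hx)
    obtain ⟨b, hyb, hb⟩ := (h3.and h4).exists
    have hsub : Icc a b ⊆ Ioo (0:ℝ) 1 := fun x hx =>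
      ⟨lt_of_lt_of_le ha.1 hx.1, lt_of_le_of_lt hx.2 hb.2⟩
    have hivt := intermediate_value_Icc' hb.1.le ((f_cont).mono hsub)
    have hy2 : y ∈ Icc ((fun r : ℝ => m r / (4 * E' r * K r - π)) b)
        ((fun r : ℝ => m r / (4 * E' r * K r - π)) a) := ⟨hyb.le, hya.le⟩
    obtain ⟨c, hc, hcy⟩ := hivt hy2
    exact ⟨c, hsub hc, hcy⟩

theorem stmt_17 :
    StrictAntiOn (fun r : ℝ => m r / (4 * E' r * K r - π)) (Set.Ioo (0:ℝ) 1) ∧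
    (fun r : ℝ => m r / (4 * E' r * K r - π)) '' Set.Ioo (0:ℝ) 1 = Set.Ioi (0:ℝ) := by
  exact ⟨f_strictAntiOn, f_image⟩
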